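/- The weight of the stay-then-right path: for every n ≥ 1, Ξ_n(n−1) = √(((r−1)/r)·(r+n−1)/(r+n−2)) · S_0, where S_0 = [[0, 0], [√(1−1/r²), 1/r]]; consequently lim_{n→∞} Ξ_n(n−1) = √((r−1)/r) · [[0, 0], [√(1−1/r²), 1/r]] (entrywise limit of 2×2 matrices). -/

import Mathlib

open Filter Topology Matrix

/-- Coin parameter `γ_j = 1/(r+j)`. -/
noncomputable def gam (r : ℝ) (j : ℕ) : ℝ := 1 / (r + j)

/-- `ρ_j = √(1 - γ_j²)`. -/
noncomputable def rho (r : ℝ) (j : ℕ) : ℝ := Real.sqrt (1 - gam r j ^ 2)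

/-- `P_j = [[ρ_j, γ_j], [0, 0]]`. -/
noncomputable def Pmat (r : ℝ) (j : ℕ) : Matrix (Fin 2) (Fin 2) ℂ :=
  !![(rho r j : ℂ), (gam r j : ℂ); 0, 0]

/-- `Q_j = [[0, 0], [−γ_j, ρ_j]]`. -/
noncomputable def Qmat (r : ℝ) (j : ℕ) : Matrix (Fin 2) (Fin 2) ℂ :=
  !![0, 0; (-(gam r j) : ℂ), (rho r j : ℂ)]

/-- `S_0 = [[0, 0], [ρ_0, γ_0]]`. -/
noncomputable def Smat (r : ℝ) : Matrix (Fin 2) (Fin 2) ℂ :=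
  !![0, 0; (rho r 0 : ℂ), (gam r 0 : ℂ)]

/-- Weight matrices `Ξ_n(j)` of the first-kind half-line quantum walk with
coin parameters `γ_j = 1/(r+j)`. -/
noncomputable def Xi (r : ℝ) : ℕ → ℕ → Matrix (Fin 2) (Fin 2) ℂ
  | 0, 0 => 1
  | 0, _ + 1 => 0
  | n + 1, 0 => Pmat r 1 * Xi r n 1 + Smat r * Xi r n 0
  | n + 1, j + 1 => Pmat r (j + 2) * Xi r n (j + 2) + Qmat r j * Xi r n j

/-- Position distribution `μ_n(j) = ‖Ξ_n(j) φ_0‖²` (squared Euclidean norm on `ℂ²`)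
for the initial coin state `φ_0 = (α, β)`. -/
noncomputable def mu (r : ℝ) (α β : ℂ) (n j : ℕ) : ℝ :=
  ‖(Xi r n j).mulVec ![α, β] 0‖ ^ 2
    + ‖(Xi r n j).mulVec ![α, β] 1‖ ^ 2

lemma Xi_zero (r : ℝ) : ∀ n j : ℕ, n < j → Xi r n j = 0 := by
  intro n
  induction n with
  | zero => intro j hj; match j, hj with
    | j + 1, _ => rfl
  | succ n ih =>
    intro j hj
    match j, hj with
    | j + 1, hj =>
      have h1 : Xi r n (j + 2) = 0 := ih _ (by omega)
      have h2 : Xi r n j = 0 := ih _ (by omega)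
      show Pmat r (j + 2) * Xi r n (j + 2) + Qmat r j * Xi r n j = 0
      rw [h1, h2, mul_zero, mul_zero, add_zero]

lemma key (r : ℝ) (hr : 1 < r) : ∀ m : ℕ,
    Xi r (m + 1) m = (Real.sqrt ((r - 1) / r * ((r + m) / (r + m - 1))) : ℂ) •
      !![0, 0; (Real.sqrt (1 - 1 / r ^ 2) : ℂ), ((1 / r : ℝ) : ℂ)] := by
  have hr0 : r ≠ 0 := by linarith
  intro m
  induction m with
  | zero =>
    show Pmat r 1 * Xi r 0 1 + Smat r * Xi r 0 0 = _
    rw [show Xi r 0 1 = 0 from rfl, show Xi r 0 0 = 1 from rfl, mul_zero, mul_one, zero_add]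
    have hr1 : r - 1 ≠ 0 := by linarith
    have hs : (r - 1) / r * ((r + (0:ℕ)) / (r + (0:ℕ) - 1)) = 1 := by
      push_cast; rw [add_zero, div_mul_div_comm, mul_comm (r - 1) r, div_self (mul_ne_zero hr0 hr1)]
    rw [hs, Real.sqrt_one, Complex.ofReal_one, one_smul]
    simp [Smat, rho, gam, div_pow]
  | succ m ih =>
    show Pmat r (m + 2) * Xi r (m + 1) (m + 2) + Qmat r m * Xi r (m + 1) m = _
    rw [Xi_zero r (m+1) (m+2) (by omega), mul_zero, zero_add, ih, Matrix.mul_smul]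
    have hq : Qmat r m * !![0, 0; (Real.sqrt (1 - 1 / r ^ 2) : ℂ), ((1 / r : ℝ) : ℂ)]
        = ((rho r m : ℝ) : ℂ) • !![0, 0; (Real.sqrt (1 - 1 / r ^ 2) : ℂ), ((1 / r : ℝ) : ℂ)] := by
      unfold Qmat
      ext i k
      fin_cases i <;> fin_cases k <;>
        simp [Matrix.mul_apply, Fin.sum_univ_two, mul_comm]
    rw [hq, smul_smul]
    have hm1 : (1:ℝ) ≤ r + m := by
      have : (0:ℝ) ≤ (m:ℝ) := Nat.cast_nonneg m
      linarith
    have hrm : r + (m:ℝ) ≠ 0 := by linarith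
    have hrm1 : r + (m:ℝ) - 1 ≠ 0 := by
      have : (0:ℝ) ≤ (m:ℝ) := Nat.cast_nonneg m
      intro h; nlinarith
    have hscal : rho r m * Real.sqrt ((r - 1) / r * ((r + m) / (r + m - 1)))
        = Real.sqrt ((r - 1) / r * ((r + (m+1:ℕ)) / (r + (m+1:ℕ) - 1))) := by
      unfold rho gam
      rw [← Real.sqrt_mul (by
        have h1 : (1:ℝ)/(r+m) ≤ 1 := by
          rw [div_le_one (by linarith)]; linarith
        have h2 : (0:ℝ) ≤ 1/(r+m) := by positivity
        nlinarith)]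
      congr 1
      push_cast
      have hone : r + (↑m + 1) - 1 = r + (m:ℝ) := by ring
      rw [hone]
      field_simp; ring
    rw [show (Real.sqrt ((r - 1) / r * ((r + m) / (r + m - 1))) : ℂ) * ((rho r m : ℝ) : ℂ)
        = ((rho r m * Real.sqrt ((r - 1) / r * ((r + m) / (r + m - 1))) : ℝ) : ℂ) by push_cast; ring,
      hscal]

/-- The weight of the stay-then-right path:
`Ξ_n(n−1) = √(((r−1)/r)·(r+n−1)/(r+n−2)) · S_0` for `n ≥ 1`, and consequently
`Ξ_n(n−1) → √((r−1)/r) · [[0,0],[√(1−1/r²), 1/r]]` entrywise. -/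
theorem stay_then_right_path_weight (r : ℝ) (hr : 1 < r) :
    (∀ n : ℕ, 1 ≤ n →
      Xi r n (n - 1) = (Real.sqrt ((r - 1) / r * ((r + n - 1) / (r + n - 2))) : ℂ) •
        !![0, 0; (Real.sqrt (1 - 1 / r ^ 2) : ℂ), ((1 / r : ℝ) : ℂ)]) ∧
    ∀ i k : Fin 2,
      Tendsto (fun n : ℕ => Xi r n (n - 1) i k) atTop
        (nhds (((Real.sqrt ((r - 1) / r) : ℂ) •
          !![0, 0; (Real.sqrt (1 - 1 / r ^ 2) : ℂ), ((1 / r : ℝ) : ℂ)]) i k)) := by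
  have hform : ∀ n : ℕ, 1 ≤ n →
      Xi r n (n - 1) = (Real.sqrt ((r - 1) / r * ((r + n - 1) / (r + n - 2))) : ℂ) •
        !![0, 0; (Real.sqrt (1 - 1 / r ^ 2) : ℂ), ((1 / r : ℝ) : ℂ)] := by
    intro n hn
    obtain ⟨m, rfl⟩ : ∃ m, n = m + 1 := ⟨n - 1, by omega⟩
    have := key r hr m
    rw [show m + 1 - 1 = m by omega, this]
    congr 2
    push_cast
    ring_nf
  refine ⟨hform, ?_⟩
  intro i k
  -- real scalar limit
  have h1 : Tendsto (fun n : ℕ => ((r - 2) + (n : ℝ))) atTop atTop :=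
    tendsto_atTop_add_const_left _ _ tendsto_natCast_atTop_atTop
  have h2 : Tendsto (fun n : ℕ => ((r - 2) + (n : ℝ))⁻¹) atTop (nhds 0) :=
    h1.inv_tendsto_atTop
  have h3 : Tendsto (fun n : ℕ => (r - 1) / r * (1 + ((r - 2) + (n : ℝ))⁻¹)) atTop
      (nhds ((r - 1) / r)) := by
    have hA := ((tendsto_const_nhds : Tendsto (fun _ : ℕ => (1:ℝ)) atTop (nhds 1)).add h2)
    have h4 := ((tendsto_const_nhds : Tendsto (fun _ : ℕ => (r-1)/r) atTop (nhds ((r-1)/r))).mul hA)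
    simpa using h4
  have h5 : Tendsto (fun n : ℕ => (r - 1) / r * ((r + n - 1) / (r + n - 2))) atTop
      (nhds ((r - 1) / r)) := by
    refine h3.congr' ?_
    filter_upwards [eventually_ge_atTop 3] with n hn
    have hn' : (3:ℝ) ≤ (n:ℝ) := by exact_mod_cast hn
    have hne : r + (n:ℝ) - 2 ≠ 0 := by linarith
    rw [show (r - 2) + (n:ℝ) = r + n - 2 by ring]
    congr 1
    have : (r + (n:ℝ) - 1) = (1 + (r + n - 2)⁻¹) * (r + n - 2) := by
      field_simp; ring
    rw [this, mul_div_assoc, div_self hne, mul_one]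
  have h6 : Tendsto (fun n : ℕ => Real.sqrt ((r - 1) / r * ((r + n - 1) / (r + n - 2)))) atTop
      (nhds (Real.sqrt ((r - 1) / r))) :=
    (Real.continuous_sqrt.tendsto _).comp h5
  have h7 : Tendsto (fun n : ℕ =>
      ((Real.sqrt ((r - 1) / r * ((r + n - 1) / (r + n - 2))) : ℝ) : ℂ)) atTop
      (nhds ((Real.sqrt ((r - 1) / r) : ℂ))) :=
    (Complex.continuous_ofReal.tendsto _).comp h6
  have h8 := h7.mul_const (!![0, 0; (Real.sqrt (1 - 1 / r ^ 2) : ℂ), ((1 / r : ℝ) : ℂ)] i k)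
  rw [Matrix.smul_apply, smul_eq_mul]
  refine h8.congr' ?_
  filter_upwards [eventually_ge_atTop 1] with n hn
  rw [hform n hn, Matrix.smul_apply, smul_eq_mul]
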